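/- Let G be a multigraph realizing degree sequence d with m_t light triple-edges, m_d light double-edges, and m_l light single loops, and no other non-simple edges. Then the number of simple ordered pairs (v_4, v_5) (i.e., ordered pairs of nodes connected by a simple edge) such that (a) v_4 and v_5 are disjoint from a fixed light simple two-star v_1v_2v_3, and (b) v_2v_4 and v_3v_5 are non-edges, is at least M_1 - 6·m_t - 4·m_d - 2·m_l - 2·A_2 - 4·d_1 - 2·d_h, where A_2 = Σ_{i=1}^{d_1} d_i. -/

import Mathlib

open Finset

/-- A multigraph on `n` nodes, given by a symmetric multiplicity function.
`mult i i` is the multiplicity of the loop at `i`. -/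
structure Multigraph (n : ℕ) where
  mult : Fin n → Fin n → ℕ
  symm : ∀ i j, mult i j = mult j i

namespace Multigraph

/-- The degree of a node: a loop counts twice. -/
def deg {n : ℕ} (G : Multigraph n) (i : Fin n) : ℕ :=
  2 * G.mult i i + ∑ j ∈ Finset.univ.filter (fun j => j ≠ i), G.mult i j

/-- `i j` is a simple edge: non-loop of multiplicity exactly 1. -/
def Simple {n : ℕ} (G : Multigraph n) (i j : Fin n) : Prop :=
  i ≠ j ∧ G.mult i j = 1

instance {n : ℕ} (G : Multigraph n) (i j : Fin n) : Decidable (G.Simple i j) :=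
  inferInstanceAs (Decidable (i ≠ j ∧ G.mult i j = 1))

end Multigraph

/-- The (0-indexed) degree sequence extended to all of `ℕ` by zero. -/
def dExt (n : ℕ) (d : Fin n → ℕ) (i : ℕ) : ℕ :=
  if h : i < n then d ⟨i, h⟩ else 0

lemma simple_symm {n : ℕ} (G : Multigraph n) {i j : Fin n} (hij : G.Simple i j) :
    G.Simple j i := ⟨hij.1.symm, by rw [G.symm]; exact hij.2⟩

lemma card_simple_le {n : ℕ} (G : Multigraph n) (i : Fin n) :
    (Finset.univ.filter (fun j => G.Simple i j)).card ≤ G.deg i := by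
  have h1 : (Finset.univ.filter (fun j => G.Simple i j)).card
      = ∑ j ∈ Finset.univ.filter (fun j => G.Simple i j), G.mult i j := by
    rw [Finset.card_eq_sum_ones]
    exact Finset.sum_congr rfl (fun j hj => ((Finset.mem_filter.1 hj).2.2).symm)
  have h2 : Finset.univ.filter (fun j => G.Simple i j)
      ⊆ Finset.univ.filter (fun j => j ≠ i) := by
    intro j hj
    simp only [Finset.mem_filter, Finset.mem_univ, true_and] at *
    exact (hj.1).symm
  rw [h1]
  calc ∑ j ∈ Finset.univ.filter (fun j => G.Simple i j), G.mult i j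
      ≤ ∑ j ∈ Finset.univ.filter (fun j => j ≠ i), G.mult i j :=
        Finset.sum_le_sum_of_subset h2
    _ ≤ G.deg i := Nat.le_add_left _ _

lemma card_nbr_le {n : ℕ} (G : Multigraph n) (v : Fin n) :
    (Finset.univ.filter (fun j => G.mult v j ≠ 0)).card ≤ G.deg v := by
  set w : Fin n → ℕ := fun j => if j = v then 2 * G.mult v v else G.mult v j with hw
  have h1 : (Finset.univ.filter (fun j => G.mult v j ≠ 0)).card
      ≤ ∑ j ∈ Finset.univ.filter (fun j => G.mult v j ≠ 0), w j := by
    rw [Finset.card_eq_sum_ones]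
    apply Finset.sum_le_sum
    intro j hj
    have := (Finset.mem_filter.1 hj).2
    simp only [hw]
    split_ifs with he
    · subst he; omega
    · omega
  have h2 : ∑ j ∈ Finset.univ.filter (fun j => G.mult v j ≠ 0), w j
      ≤ ∑ j ∈ Finset.univ, w j :=
    Finset.sum_le_sum_of_subset (Finset.filter_subset _ _)
  have h3 : ∑ j ∈ Finset.univ, w j = G.deg v := by
    rw [← Finset.add_sum_erase Finset.univ w (Finset.mem_univ v)]
    have e1 : w v = 2 * G.mult v v := by simp [hw]
    have e2 : ∑ j ∈ Finset.univ.erase v, w j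
        = ∑ j ∈ Finset.univ.filter (fun j => j ≠ v), G.mult v j := by
      rw [Finset.filter_ne']
      apply Finset.sum_congr rfl
      intro j hj
      simp [hw, Finset.ne_of_mem_erase hj]
    rw [e1, e2]; rfl
  omega

lemma card_pairs_fst_le {n : ℕ} (G : Multigraph n) (v : Fin n) :
    (Finset.univ.filter (fun p : Fin n × Fin n => G.Simple p.1 p.2 ∧ p.1 = v)).card
      ≤ G.deg v := by
  refine le_trans ?_ (card_simple_le G v)
  apply Finset.card_le_card_of_injOn (fun p => p.2)
  · intro p hp
    simp only [Finset.mem_coe, Finset.mem_filter, Finset.mem_univ, true_and] at *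
    have := hp.1; rw [hp.2] at this; exact this
  · intro p hp q hq hpq
    simp only [Finset.mem_coe, Finset.mem_filter, Finset.mem_univ, true_and] at hp hq
    exact Prod.ext (hp.2.trans hq.2.symm) hpq

lemma card_pairs_snd_le {n : ℕ} (G : Multigraph n) (v : Fin n) :
    (Finset.univ.filter (fun p : Fin n × Fin n => G.Simple p.1 p.2 ∧ p.2 = v)).card
      ≤ G.deg v := by
  refine le_trans ?_ (card_simple_le G v)
  apply Finset.card_le_card_of_injOn (fun p => p.1)
  · intro p hp
    simp only [Finset.mem_coe, Finset.mem_filter, Finset.mem_univ, true_and] at *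
    have := simple_symm G hp.1; rw [hp.2] at this; exact this
  · intro p hp q hq hpq
    simp only [Finset.mem_coe, Finset.mem_filter, Finset.mem_univ, true_and] at hp hq
    exact Prod.ext hpq (hp.2.trans hq.2.symm)
lemma sum_le_sorted {n : ℕ} (d : Fin n → ℕ)
    (hs : ∀ i j : Fin n, i ≤ j → d j ≤ d i) :
    ∀ (m : ℕ) (T : Finset (Fin n)) (a : ℕ), T.card = m → (∀ i ∈ T, a ≤ i.val) →
    ∑ i ∈ T, d i ≤ ∑ k ∈ Finset.range m, dExt n d (a + k) := by
  intro m
  induction m with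
  | zero =>
    intro T a hc _
    rw [Finset.card_eq_zero] at hc; simp [hc]
  | succ m ih =>
    intro T a hc ha
    have hne : T.Nonempty := Finset.card_pos.1 (by omega)
    set i0 := T.min' hne with hi0
    have hi0T : i0 ∈ T := T.min'_mem hne
    have hT' : (T.erase i0).card = m := by
      rw [Finset.card_erase_of_mem hi0T, hc]
      omega
    have ha' : ∀ i ∈ T.erase i0, a + 1 ≤ i.val := by
      intro i hi
      have hiT := Finset.mem_of_mem_erase hi
      have hne' := Finset.ne_of_mem_erase hi
      have hlt : i0 < i := lt_of_le_of_ne (T.min'_le i hiT) (Ne.symm hne')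
      have h1 : i0.val < i.val := hlt
      have h2 : a ≤ i0.val := ha i0 hi0T
      omega
    have han : a < n := lt_of_le_of_lt (ha i0 hi0T) i0.isLt
    have hda : d i0 ≤ dExt n d a := by
      have : d i0 ≤ d ⟨a, han⟩ := hs ⟨a, han⟩ i0 (ha i0 hi0T)
      simpa [dExt, han] using this
    have hsum : ∑ i ∈ T, d i = d i0 + ∑ i ∈ T.erase i0, d i :=
      (Finset.add_sum_erase T d hi0T).symm
    have hrec := ih (T.erase i0) (a + 1) hT' ha'
    have hr : ∑ k ∈ Finset.range (m+1), dExt n d (a + k)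
        = dExt n d a + ∑ k ∈ Finset.range m, dExt n d (a + 1 + k) := by
      rw [Finset.sum_range_succ']
      have : ∀ k ∈ Finset.range m, dExt n d (a + (k + 1)) = dExt n d (a + 1 + k) := by
        intro k _; congr 1; omega
      have h0 : dExt n d (a + 0) = dExt n d a := by rw [Nat.add_zero]
      rw [Finset.sum_congr rfl this, h0]
      omega
    rw [hsum, hr]
    exact Nat.add_le_add hda hrec
open Finset

lemma d_le_d0 {n : ℕ} (d : Fin n → ℕ) (hs : ∀ i j : Fin n, i ≤ j → d j ≤ d i)
    (v : Fin n) : d v ≤ dExt n d 0 := by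
  have h0 : (0 : ℕ) < n := v.pos
  have := hs ⟨0, h0⟩ v (by simp [Fin.le_def])
  simpa [dExt, h0] using this

lemma sum_le_sorted' {n : ℕ} (d : Fin n → ℕ)
    (hs : ∀ i j : Fin n, i ≤ j → d j ≤ d i) (T : Finset (Fin n)) :
    ∑ i ∈ T, d i ≤ ∑ k ∈ Finset.range T.card, dExt n d k := by
  have := sum_le_sorted d hs T.card T 0 rfl (fun i _ => Nat.zero_le _)
  calc ∑ i ∈ T, d i ≤ ∑ k ∈ Finset.range T.card, dExt n d (0 + k) := this
    _ = ∑ k ∈ Finset.range T.card, dExt n d k := by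
        apply Finset.sum_congr rfl; intro k _; rw [Nat.zero_add]

lemma card_pairs_adj_fst_le {n : ℕ} (G : Multigraph n) (d : Fin n → ℕ)
    (hdeg : ∀ i, G.deg i = d i) (hs : ∀ i j : Fin n, i ≤ j → d j ≤ d i) (v : Fin n) :
    (Finset.univ.filter (fun p : Fin n × Fin n =>
        G.Simple p.1 p.2 ∧ G.mult v p.1 ≠ 0)).card
      ≤ ∑ k ∈ Finset.range (dExt n d 0), dExt n d k := by
  set S := Finset.univ.filter (fun p : Fin n × Fin n =>
      G.Simple p.1 p.2 ∧ G.mult v p.1 ≠ 0) with hS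
  set N := Finset.univ.filter (fun j : Fin n => G.mult v j ≠ 0) with hN
  have hfib : S.card = ∑ i ∈ N, (S.filter (fun p => p.1 = i)).card := by
    apply Finset.card_eq_sum_card_fiberwise
    intro p hp
    simp only [hS, hN, Finset.mem_coe, Finset.mem_filter, Finset.mem_univ, true_and] at *
    exact hp.2
  have hfb : ∀ i ∈ N, (S.filter (fun p => p.1 = i)).card ≤ d i := by
    intro i _
    rw [← hdeg]
    refine le_trans ?_ (card_simple_le G i)
    apply Finset.card_le_card_of_injOn (fun p => p.2)
    · intro p hp
      simp only [hS, Finset.mem_coe, Finset.mem_filter, Finset.mem_univ, true_and] at *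
      have := hp.1.1; rw [hp.2] at this; exact this
    · intro p hp q hq hpq
      simp only [Finset.mem_coe, Finset.mem_filter] at hp hq
      exact Prod.ext (hp.2.trans hq.2.symm) hpq
  have hNcard : N.card ≤ dExt n d 0 := by
    have h1 : N.card ≤ G.deg v := card_nbr_le G v
    rw [hdeg] at h1
    exact h1.trans (d_le_d0 d hs v)
  calc S.card = ∑ i ∈ N, (S.filter (fun p => p.1 = i)).card := hfib
    _ ≤ ∑ i ∈ N, d i := Finset.sum_le_sum hfb
    _ ≤ ∑ k ∈ Finset.range N.card, dExt n d k := sum_le_sorted' d hs N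
    _ ≤ ∑ k ∈ Finset.range (dExt n d 0), dExt n d k :=
        Finset.sum_le_sum_of_subset (Finset.range_subset_range.2 hNcard)

lemma card_pairs_adj_snd_le {n : ℕ} (G : Multigraph n) (d : Fin n → ℕ)
    (hdeg : ∀ i, G.deg i = d i) (hs : ∀ i j : Fin n, i ≤ j → d j ≤ d i) (v : Fin n) :
    (Finset.univ.filter (fun p : Fin n × Fin n =>
        G.Simple p.1 p.2 ∧ G.mult v p.2 ≠ 0)).card
      ≤ ∑ k ∈ Finset.range (dExt n d 0), dExt n d k := by
  set S := Finset.univ.filter (fun p : Fin n × Fin n =>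
      G.Simple p.1 p.2 ∧ G.mult v p.2 ≠ 0) with hS
  set N := Finset.univ.filter (fun j : Fin n => G.mult v j ≠ 0) with hN
  have hfib : S.card = ∑ i ∈ N, (S.filter (fun p => p.2 = i)).card := by
    apply Finset.card_eq_sum_card_fiberwise
    intro p hp
    simp only [hS, hN, Finset.mem_coe, Finset.mem_filter, Finset.mem_univ, true_and] at *
    exact hp.2
  have hfb : ∀ i ∈ N, (S.filter (fun p => p.2 = i)).card ≤ d i := by
    intro i _
    rw [← hdeg]
    refine le_trans ?_ (card_simple_le G i)
    apply Finset.card_le_card_of_injOn (fun p => p.1)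
    · intro p hp
      simp only [hS, Finset.mem_coe, Finset.mem_filter, Finset.mem_univ, true_and] at *
      have := simple_symm G hp.1.1; rw [hp.2] at this; exact this
    · intro p hp q hq hpq
      simp only [Finset.mem_coe, Finset.mem_filter] at hp hq
      exact Prod.ext hpq (hp.2.trans hq.2.symm)
  have hNcard : N.card ≤ dExt n d 0 := by
    have h1 : N.card ≤ G.deg v := card_nbr_le G v
    rw [hdeg] at h1
    exact h1.trans (d_le_d0 d hs v)
  calc S.card = ∑ i ∈ N, (S.filter (fun p => p.2 = i)).card := hfib
    _ ≤ ∑ i ∈ N, d i := Finset.sum_le_sum hfb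
    _ ≤ ∑ k ∈ Finset.range N.card, dExt n d k := sum_le_sorted' d hs N
    _ ≤ ∑ k ∈ Finset.range (dExt n d 0), dExt n d k :=
        Finset.sum_le_sum_of_subset (Finset.range_subset_range.2 hNcard)

/-- lower bound on the number of simple ordered pairs compatible
with a fixed light simple two-star `v₁v₂v₃`. -/
theorem stmt1 (n h mt md ml : ℕ) (G : Multigraph n) (d : Fin n → ℕ)
    (hdeg : ∀ i, G.deg i = d i)
    (hsorted : ∀ i j : Fin n, i ≤ j → d j ≤ d i)
    (hh1 : 1 ≤ h) (hhn : h ≤ n)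
    (htriple : (Finset.univ.filter (fun p : Fin n × Fin n =>
        p.1 ≠ p.2 ∧ G.mult p.1 p.2 = 3 ∧ (h ≤ p.1.val ∨ h ≤ p.2.val))).card = 2 * mt)
    (hdouble : (Finset.univ.filter (fun p : Fin n × Fin n =>
        p.1 ≠ p.2 ∧ G.mult p.1 p.2 = 2 ∧ (h ≤ p.1.val ∨ h ≤ p.2.val))).card = 2 * md)
    (hloop : (Finset.univ.filter (fun i : Fin n =>
        G.mult i i = 1 ∧ h ≤ i.val)).card = ml)
    (hmax : ∀ i j : Fin n, i ≠ j → G.mult i j ≤ 3)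
    (hmultilight : ∀ i j : Fin n, i ≠ j → 2 ≤ G.mult i j → (h ≤ i.val ∨ h ≤ j.val))
    (hloopmax : ∀ i : Fin n, G.mult i i ≤ 1)
    (hlooplight : ∀ i : Fin n, G.mult i i = 1 → h ≤ i.val)
    -- a fixed light simple two-star v₁v₂v₃
    (v1 v2 v3 : Fin n) (hv1 : h ≤ v1.val)
    (hs12 : G.Simple v1 v2) (hs13 : G.Simple v1 v3) (hne23 : v2 ≠ v3) :
    ((∑ i : Fin n, d i : ℕ) : ℤ)
      - 6 * (mt : ℤ) - 4 * (md : ℤ) - 2 * (ml : ℤ)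
      - 2 * ((∑ i ∈ Finset.range (dExt n d 0), dExt n d i : ℕ) : ℤ)
      - 4 * (dExt n d 0 : ℤ) - 2 * (dExt n d (h - 1) : ℤ)
    ≤ ((Finset.univ.filter (fun p : Fin n × Fin n =>
        G.Simple p.1 p.2 ∧
        p.1 ≠ v1 ∧ p.1 ≠ v2 ∧ p.1 ≠ v3 ∧ p.2 ≠ v1 ∧ p.2 ≠ v2 ∧ p.2 ≠ v3 ∧
        G.mult v2 p.1 = 0 ∧ G.mult v3 p.2 = 0)).card : ℤ) := by
  classical
  set A2 := ∑ i ∈ Finset.range (dExt n d 0), dExt n d i with hA2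
  have hn : 0 < n := v1.pos
  have hh1n : h - 1 < n := by omega
  have hdhv1 : d v1 ≤ dExt n d (h - 1) := by
    have h1 : d v1 ≤ d ⟨h - 1, hh1n⟩ :=
      hsorted ⟨h - 1, hh1n⟩ v1 (by simp [Fin.le_def]; omega)
    simpa [dExt, hh1n] using h1
  set Ss := Finset.univ.filter (fun p : Fin n × Fin n => G.Simple p.1 p.2) with hSs
  -- main counting identity
  have hM1 : ∑ i : Fin n, d i = Ss.card + 3 * (2 * mt) + 2 * (2 * md) + 2 * ml := by
    have hdegsum : ∑ i : Fin n, d i = ∑ i : Fin n, G.deg i :=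
      Finset.sum_congr rfl (fun i _ => (hdeg i).symm)
    have hsplit : ∑ i : Fin n, G.deg i
        = 2 * (∑ i : Fin n, G.mult i i)
          + ∑ i : Fin n, ∑ j ∈ Finset.univ.filter (fun j => j ≠ i), G.mult i j := by
      rw [Finset.mul_sum, ← Finset.sum_add_distrib]
      rfl
    have hloops : ∑ i : Fin n, G.mult i i = ml := by
      rw [← hloop, Finset.card_filter]
      apply Finset.sum_congr rfl
      intro i _
      have h1 := hloopmax i
      by_cases hz : G.mult i i = 1
      · simp [hz, hlooplight i hz]
      · have h0 : G.mult i i = 0 := by omega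
        simp [h0]
    set P := Finset.univ.filter (fun p : Fin n × Fin n => p.1 ≠ p.2) with hP
    have e1 : ∑ p ∈ P, G.mult p.1 p.2
        = ∑ i : Fin n, ∑ j ∈ Finset.univ.filter (fun j => j ≠ i), G.mult i j := by
      rw [hP, Finset.sum_filter, Fintype.sum_prod_type]
      apply Finset.sum_congr rfl; intro i _
      rw [Finset.sum_filter]
      apply Finset.sum_congr rfl; intro j _
      by_cases hij : i = j
      · subst hij; simp
      · simp [hij, Ne.symm hij]
    have e2 : ∀ p ∈ P, G.mult p.1 p.2 =
        (if G.Simple p.1 p.2 then 1 else 0)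
        + 2 * (if p.1 ≠ p.2 ∧ G.mult p.1 p.2 = 2 ∧ (h ≤ p.1.val ∨ h ≤ p.2.val) then 1 else 0)
        + 3 * (if p.1 ≠ p.2 ∧ G.mult p.1 p.2 = 3 ∧ (h ≤ p.1.val ∨ h ≤ p.2.val) then 1 else 0) := by
      intro p hp
      have hne : p.1 ≠ p.2 := (Finset.mem_filter.1 hp).2
      have h3 := hmax p.1 p.2 hne
      have hm : G.mult p.1 p.2 = 0 ∨ G.mult p.1 p.2 = 1 ∨ G.mult p.1 p.2 = 2
          ∨ G.mult p.1 p.2 = 3 := by omega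
      rcases hm with hm|hm|hm|hm
      · simp [Multigraph.Simple, hm, hne]
      · simp [Multigraph.Simple, hm, hne]
      · have hl := hmultilight p.1 p.2 hne (by omega)
        simp [Multigraph.Simple, hm, hne, hl]
      · have hl := hmultilight p.1 p.2 hne (by omega)
        simp [Multigraph.Simple, hm, hne, hl]
    have key2 : P.filter (fun p : Fin n × Fin n => G.Simple p.1 p.2) = Ss := by
      rw [hP, hSs, Finset.filter_filter]
      ext p
      simp only [Finset.mem_filter, Finset.mem_univ, true_and]
      exact ⟨fun hq => hq.2, fun hq => ⟨hq.1, hq⟩⟩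
    have key3 : P.filter (fun p : Fin n × Fin n =>
          p.1 ≠ p.2 ∧ G.mult p.1 p.2 = 2 ∧ (h ≤ p.1.val ∨ h ≤ p.2.val))
        = Finset.univ.filter (fun p : Fin n × Fin n =>
          p.1 ≠ p.2 ∧ G.mult p.1 p.2 = 2 ∧ (h ≤ p.1.val ∨ h ≤ p.2.val)) := by
      rw [hP, Finset.filter_filter]
      ext p
      simp only [Finset.mem_filter, Finset.mem_univ, true_and]
      exact ⟨fun hq => hq.2, fun hq => ⟨hq.1, hq⟩⟩
    have key4 : P.filter (fun p : Fin n × Fin n =>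
          p.1 ≠ p.2 ∧ G.mult p.1 p.2 = 3 ∧ (h ≤ p.1.val ∨ h ≤ p.2.val))
        = Finset.univ.filter (fun p : Fin n × Fin n =>
          p.1 ≠ p.2 ∧ G.mult p.1 p.2 = 3 ∧ (h ≤ p.1.val ∨ h ≤ p.2.val)) := by
      rw [hP, Finset.filter_filter]
      ext p
      simp only [Finset.mem_filter, Finset.mem_univ, true_and]
      exact ⟨fun hq => hq.2, fun hq => ⟨hq.1, hq⟩⟩
    have efin : ∑ p ∈ P, G.mult p.1 p.2
        = Ss.card + 2 * (2 * md) + 3 * (2 * mt) := by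
      rw [Finset.sum_congr rfl e2, Finset.sum_add_distrib, Finset.sum_add_distrib,
          ← Finset.mul_sum, ← Finset.mul_sum]
      have c1 : ∑ p ∈ P, (if G.Simple p.1 p.2 then 1 else 0) = Ss.card := by
        rw [← Finset.card_filter, key2]
      have c2 : ∑ p ∈ P, (if p.1 ≠ p.2 ∧ G.mult p.1 p.2 = 2 ∧ (h ≤ p.1.val ∨ h ≤ p.2.val)
          then 1 else 0) = 2 * md := by
        rw [← Finset.card_filter, key3, hdouble]
      have c3 : ∑ p ∈ P, (if p.1 ≠ p.2 ∧ G.mult p.1 p.2 = 3 ∧ (h ≤ p.1.val ∨ h ≤ p.2.val)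
          then 1 else 0) = 2 * mt := by
        rw [← Finset.card_filter, key4, htriple]
      rw [c1, c2, c3]
    omega
  -- bad sets
  set Good := Finset.univ.filter (fun p : Fin n × Fin n =>
      G.Simple p.1 p.2 ∧
      p.1 ≠ v1 ∧ p.1 ≠ v2 ∧ p.1 ≠ v3 ∧ p.2 ≠ v1 ∧ p.2 ≠ v2 ∧ p.2 ≠ v3 ∧
      G.mult v2 p.1 = 0 ∧ G.mult v3 p.2 = 0) with hGood
  set B1 := Finset.univ.filter (fun p : Fin n × Fin n => G.Simple p.1 p.2 ∧ p.1 = v1) with hB1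
  set B2 := Finset.univ.filter (fun p : Fin n × Fin n => G.Simple p.1 p.2 ∧ p.1 = v2) with hB2
  set B3 := Finset.univ.filter (fun p : Fin n × Fin n => G.Simple p.1 p.2 ∧ p.1 = v3) with hB3
  set B4 := Finset.univ.filter (fun p : Fin n × Fin n => G.Simple p.1 p.2 ∧ p.2 = v1) with hB4
  set B5 := Finset.univ.filter (fun p : Fin n × Fin n => G.Simple p.1 p.2 ∧ p.2 = v2) with hB5
  set B6 := Finset.univ.filter (fun p : Fin n × Fin n => G.Simple p.1 p.2 ∧ p.2 = v3) with hB6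
  set B7 := Finset.univ.filter (fun p : Fin n × Fin n =>
      G.Simple p.1 p.2 ∧ G.mult v2 p.1 ≠ 0) with hB7
  set B8 := Finset.univ.filter (fun p : Fin n × Fin n =>
      G.Simple p.1 p.2 ∧ G.mult v3 p.2 ≠ 0) with hB8
  have hsub : Ss ⊆ Good ∪ B1 ∪ B2 ∪ B3 ∪ B4 ∪ B5 ∪ B6 ∪ B7 ∪ B8 := by
    intro p hp
    simp only [hSs, hGood, hB1, hB2, hB3, hB4, hB5, hB6, hB7, hB8,
      Finset.mem_union, Finset.mem_filter, Finset.mem_univ, true_and] at *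
    tauto
  have hcard : Ss.card ≤ Good.card + B1.card + B2.card + B3.card + B4.card
      + B5.card + B6.card + B7.card + B8.card := by
    have u : ∀ {A B : Finset (Fin n × Fin n)} {m : ℕ},
        A.card ≤ m → (A ∪ B).card ≤ m + B.card :=
      fun hA => le_trans (Finset.card_union_le _ _) (Nat.add_le_add_right hA _)
    exact le_trans (Finset.card_le_card hsub) (u (u (u (u (u (u (u (u le_rfl))))))))
  have hB1c : B1.card ≤ dExt n d (h - 1) :=
    (card_pairs_fst_le G v1).trans (le_trans (le_of_eq (hdeg v1)) hdhv1)
  have hB4c : B4.card ≤ dExt n d (h - 1) :=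
    (card_pairs_snd_le G v1).trans (le_trans (le_of_eq (hdeg v1)) hdhv1)
  have hB2c : B2.card ≤ dExt n d 0 :=
    (card_pairs_fst_le G v2).trans (le_trans (le_of_eq (hdeg v2)) (d_le_d0 d hsorted v2))
  have hB3c : B3.card ≤ dExt n d 0 :=
    (card_pairs_fst_le G v3).trans (le_trans (le_of_eq (hdeg v3)) (d_le_d0 d hsorted v3))
  have hB5c : B5.card ≤ dExt n d 0 :=
    (card_pairs_snd_le G v2).trans (le_trans (le_of_eq (hdeg v2)) (d_le_d0 d hsorted v2))
  have hB6c : B6.card ≤ dExt n d 0 :=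
    (card_pairs_snd_le G v3).trans (le_trans (le_of_eq (hdeg v3)) (d_le_d0 d hsorted v3))
  have hB7c : B7.card ≤ A2 := card_pairs_adj_fst_le G d hdeg hsorted v2
  have hB8c : B8.card ≤ A2 := card_pairs_adj_snd_le G d hdeg hsorted v3
  omega
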